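/- arXiv:2505.00937 — 10 statements merged into one kernel-verified Lean document; each statement's English description precedes it below -/
import Mathlib

section
/- Let G be a probability measure on ℝ and for σ>0 let G_σ denote the pushforward of G under x ↦ σx. Let d assign a real number to every ordered pair of probability measures on ℝ, and let h : (0,∞) → (0,∞). Assume d is symmetric, i.e. d(F,F') = d(F',F) for all F,F', and rescalable with scaling function h, i.e. d(map(τ)F, map(τ)F') = h(τ)·d(F,F') for all τ>0 and all F,F', where map(τ)F is the pushforward of F under x ↦ τx. Fix σ>1 and suppose d(G_{1/σ}, G) > 0. Then: (1) if h is strictly increasing, d(G_σ, G) > d(G_{1/σ}, G); (2) if h is strictly decreasing, d(G_σ, G) < d(G_{1/σ}, G); (3) if h is constant, d(G_σ, G) = d(G_{1/σ}, G), the last equality holding even without the positivity assumption. In each case this follows from the identity d(G_σ, G) = h(σ)·d(G_{1/σ}, G). -/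
open MeasureTheory Set

/-- Scale-family asymmetry for symmetric rescalable divergences
(Lemma "scale-asymmetry" of the paper). -/
theorem stmt0
    (G : Measure ℝ) [IsProbabilityMeasure G]
    (d : Measure ℝ → Measure ℝ → ℝ)
    (h : ℝ → ℝ)
    (hpos : ∀ τ > (0 : ℝ), 0 < h τ)
    (hsymm : ∀ F F' : Measure ℝ, IsProbabilityMeasure F → IsProbabilityMeasure F' →
      d F F' = d F' F)
    (hrescale : ∀ τ > (0 : ℝ), ∀ F F' : Measure ℝ,
      IsProbabilityMeasure F → IsProbabilityMeasure F' →
      d (F.map (fun x => τ * x)) (F'.map (fun x => τ * x)) = h τ * d F F')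
    (σ : ℝ) (hσ : 1 < σ) :
    (d (G.map (fun x => σ * x)) G = h σ * d (G.map (fun x => σ⁻¹ * x)) G) ∧
    (0 < d (G.map (fun x => σ⁻¹ * x)) G → StrictMonoOn h (Ioi 0) →
      d (G.map (fun x => σ⁻¹ * x)) G < d (G.map (fun x => σ * x)) G) ∧
    (0 < d (G.map (fun x => σ⁻¹ * x)) G → StrictAntiOn h (Ioi 0) →
      d (G.map (fun x => σ * x)) G < d (G.map (fun x => σ⁻¹ * x)) G) ∧
    ((∀ τ₁ > (0 : ℝ), ∀ τ₂ > (0 : ℝ), h τ₁ = h τ₂) →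
      d (G.map (fun x => σ * x)) G = d (G.map (fun x => σ⁻¹ * x)) G) := by

  have hσ0 : (0:ℝ) < σ := lt_trans one_pos hσ
  have hσi0 : (0:ℝ) < σ⁻¹ := inv_pos.mpr hσ0
  have hm : ∀ τ : ℝ, Measurable (fun x : ℝ => τ * x) := fun τ => (measurable_id.const_mul τ)
  have hPσ : IsProbabilityMeasure (G.map (fun x => σ * x)) :=
    Measure.isProbabilityMeasure_map (hm σ).aemeasurable
  have hPσi : IsProbabilityMeasure (G.map (fun x => σ⁻¹ * x)) :=
    Measure.isProbabilityMeasure_map (hm σ⁻¹).aemeasurable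
  -- map σ of G_{1/σ} = G
  have hmap : (G.map (fun x => σ⁻¹ * x)).map (fun x => σ * x) = G := by
    rw [Measure.map_map (hm σ) (hm σ⁻¹)]
    have : ((fun x : ℝ => σ * x) ∘ (fun x : ℝ => σ⁻¹ * x)) = id := by
      funext x
      simp [Function.comp, ← mul_assoc, mul_inv_cancel₀ (ne_of_gt hσ0)]
    rw [this, Measure.map_id]
  have key : d (G.map (fun x => σ * x)) G = h σ * d (G.map (fun x => σ⁻¹ * x)) G := by
    have := hrescale σ hσ0 (G.map (fun x => σ⁻¹ * x)) G hPσi inferInstance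
    rw [hmap] at this
    rw [hsymm (G.map (fun x => σ * x)) G hPσ inferInstance, ← this,
      hsymm _ _ inferInstance hPσ]
  have h1 : ∀ (hd : d (G.map (fun x => σ⁻¹ * x)) G ≠ 0), h 1 = 1 := by
    intro hd
    have := hrescale 1 one_pos (G.map (fun x => σ⁻¹ * x)) G hPσi inferInstance
    simp only [one_mul, Measure.map_id'] at this
    exact (mul_right_cancel₀ hd (by linarith)).symm
  refine ⟨key, ?_, ?_, ?_⟩
  · intro hd hmono
    have h1' := h1 (ne_of_gt hd)
    have : 1 < h σ := h1' ▸ hmono (mem_Ioi.mpr one_pos) (mem_Ioi.mpr hσ0) hσ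
    nlinarith [key]
  · intro hd hanti
    have h1' := h1 (ne_of_gt hd)
    have : h σ < 1 := h1' ▸ hanti (mem_Ioi.mpr one_pos) (mem_Ioi.mpr hσ0) hσ
    nlinarith [key]
  · intro hc
    rcases eq_or_ne (d (G.map (fun x => σ⁻¹ * x)) G) 0 with h0 | h0
    · rw [key, h0, mul_zero]
    · have := hc σ hσ0 1 one_pos
      rw [key, this, h1 h0, one_mul]
end

section
/- Let P be a probability measure on ℝ with finite first moment (∫|x| dP < ∞) that is not a Dirac point mass, and let G be its cumulative distribution function. For σ>0 the scale family member G_σ (pushforward of P under x ↦ σx) has CDF y ↦ G(y/σ). Then for every σ>1 both integrals below are finite and satisfy ∫_ℝ (G(y/σ) − G(y))² dy = σ · ∫_ℝ (G(σy) − G(y))² dy > ∫_ℝ (G(σy) − G(y))² dy. Equivalently, under continuous ranked probability (CRP) loss, the overdispersed forecast G_σ incurs strictly larger expected loss against the target G than the underdispersed forecast G_{1/σ}. -/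
open MeasureTheory Set
open scoped ENNReal
open scoped Interval

private lemma crp_abs_diff_eq (P : Measure ℝ) [IsProbabilityMeasure P] {σ : ℝ} (hσ : 1 ≤ σ)
    (y : ℝ) :
    ENNReal.ofReal |(P (Iic (σ * y))).toReal - (P (Iic y)).toReal| = P (Ι y (σ * y)) := by
  rcases le_or_gt 0 y with hy | hy
  · have hle : y ≤ σ * y := by nlinarith
    rw [uIoc_of_le hle]
    have hsplit : P (Iic (σ * y)) = P (Iic y) + P (Ioc y (σ * y)) := by
      rw [← measure_union (Iic_disjoint_Ioc le_rfl) measurableSet_Ioc,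
        Iic_union_Ioc_eq_Iic hle]
    rw [hsplit, ENNReal.toReal_add (measure_ne_top _ _) (measure_ne_top _ _),
      add_sub_cancel_left, abs_of_nonneg ENNReal.toReal_nonneg,
      ENNReal.ofReal_toReal (measure_ne_top _ _)]
  · have hle : σ * y ≤ y := by nlinarith
    rw [uIoc_of_ge hle]
    have hsplit : P (Iic y) = P (Iic (σ * y)) + P (Ioc (σ * y) y) := by
      rw [← measure_union (Iic_disjoint_Ioc le_rfl) measurableSet_Ioc,
        Iic_union_Ioc_eq_Iic hle]
    rw [hsplit, ENNReal.toReal_add (measure_ne_top _ _) (measure_ne_top _ _),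
      sub_add_cancel_left, abs_neg, abs_of_nonneg ENNReal.toReal_nonneg,
      ENNReal.ofReal_toReal (measure_ne_top _ _)]

private lemma crp_key_lint (P : Measure ℝ) [IsProbabilityMeasure P] {σ : ℝ} (hσ : 1 < σ) :
    ∫⁻ y, P (Ι y (σ * y)) =
      ENNReal.ofReal (1 - 1 / σ) * ∫⁻ x, ENNReal.ofReal |x| ∂P := by
  have hσ0 : (0 : ℝ) < σ := lt_trans one_pos hσ
  set s : Set (ℝ × ℝ) := {p : ℝ × ℝ | p.2 ∈ Ι p.1 (σ * p.1)} with hs_def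
  have hs : MeasurableSet s := by
    have : s = {p : ℝ × ℝ | p.1 ⊓ (σ * p.1) < p.2} ∩ {p : ℝ × ℝ | p.2 ≤ p.1 ⊔ (σ * p.1)} := by
      ext p
      simp only [hs_def, uIoc, mem_setOf_eq, mem_Ioc, mem_inter_iff]
    rw [this]
    exact (measurableSet_lt (measurable_fst.min (measurable_fst.const_mul σ)) measurable_snd).inter
      (measurableSet_le measurable_snd (measurable_fst.max (measurable_fst.const_mul σ)))
  have h1 : ∀ y : ℝ, P (Ι y (σ * y)) = ∫⁻ x, s.indicator 1 (y, x) ∂P := by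
    intro y
    have hpt : ∀ x : ℝ, s.indicator (1 : ℝ × ℝ → ℝ≥0∞) (y, x)
        = (Ι y (σ * y)).indicator (1 : ℝ → ℝ≥0∞) x := by
      intro x
      by_cases hx : x ∈ Ι y (σ * y)
      · rw [indicator_of_mem hx, indicator_of_mem (by exact hx)]; rfl
      · rw [indicator_of_notMem hx, indicator_of_notMem (by exact hx)]
    simp_rw [hpt]
    rw [lintegral_indicator_one measurableSet_uIoc]
  have h2 : ∀ x : ℝ, (∫⁻ y, s.indicator 1 (y, x)) = ENNReal.ofReal ((1 - 1 / σ) * |x|) := by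
    intro x
    have hpt : ∀ y : ℝ, s.indicator (1 : ℝ × ℝ → ℝ≥0∞) (y, x)
        = ({y : ℝ | (y, x) ∈ s}).indicator (1 : ℝ → ℝ≥0∞) y := by
      intro y
      by_cases hx : (y, x) ∈ s
      · rw [indicator_of_mem hx, indicator_of_mem (by exact hx)]; rfl
      · rw [indicator_of_notMem hx, indicator_of_notMem (by exact hx)]
    simp_rw [hpt]
    rcases lt_trichotomy x 0 with hx | hx | hx
    · have hset : {y : ℝ | (y, x) ∈ s} = Ico x (x / σ) := by
        ext y
        simp only [hs_def, mem_setOf_eq, mem_uIoc, mem_Ico]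
        constructor
        · rintro (⟨h1', h2'⟩ | ⟨h1', h2'⟩)
          · exfalso; nlinarith
          · constructor
            · exact h2'
            · rw [lt_div_iff₀ hσ0]; nlinarith
        · rintro ⟨h1', h2'⟩
          right
          rw [lt_div_iff₀ hσ0] at h2'
          exact ⟨by nlinarith, h1'⟩
      rw [hset, lintegral_indicator_one measurableSet_Ico, Real.volume_Ico]
      congr 1
      rw [abs_of_neg hx]
      field_simp
      ring
    · have hset : {y : ℝ | (y, x) ∈ s} = (∅ : Set ℝ) := by
        ext y
        simp only [hs_def, mem_setOf_eq, mem_uIoc, mem_empty_iff_false, iff_false, hx]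
        rintro (⟨h1', h2'⟩ | ⟨h1', h2'⟩) <;> nlinarith
      rw [hset, lintegral_indicator_one MeasurableSet.empty]
      simp [hx]
    · have hset : {y : ℝ | (y, x) ∈ s} = Ico (x / σ) x := by
        ext y
        simp only [hs_def, mem_setOf_eq, mem_uIoc, mem_Ico]
        constructor
        · rintro (⟨h1', h2'⟩ | ⟨h1', h2'⟩)
          · constructor
            · rw [div_le_iff₀ hσ0]; nlinarith
            · exact h1'
          · exfalso; nlinarith
        · rintro ⟨h1', h2'⟩
          left
          rw [div_le_iff₀ hσ0] at h1'
          exact ⟨h2', by nlinarith⟩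
      rw [hset, lintegral_indicator_one measurableSet_Ico, Real.volume_Ico]
      congr 1
      rw [abs_of_pos hx]
      field_simp
  calc ∫⁻ y, P (Ι y (σ * y))
      = ∫⁻ y, ∫⁻ x, s.indicator 1 (y, x) ∂P := by simp_rw [h1]
    _ = ∫⁻ x, (∫⁻ y, s.indicator 1 (y, x)) ∂P := by
        refine lintegral_lintegral_swap ?_
        exact (measurable_const.indicator hs).aemeasurable
    _ = ∫⁻ x, ENNReal.ofReal ((1 - 1 / σ) * |x|) ∂P := by simp_rw [h2]
    _ = ENNReal.ofReal (1 - 1 / σ) * ∫⁻ x, ENNReal.ofReal |x| ∂P := by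
        simp_rw [ENNReal.ofReal_mul (by
          rw [sub_nonneg, div_le_one hσ0]; linarith : (0:ℝ) ≤ 1 - 1 / σ)]
        rw [lintegral_const_mul _ measurable_abs.ennreal_ofReal]

/-- In a scale family, CRP loss (the Cramér divergence) penalizes overdispersion
strictly more than underdispersion: for a non-degenerate target with finite first
moment and CDF `G`, and `σ > 1`,
`∫ (G(y/σ) − G(y))² dy = σ · ∫ (G(σy) − G(y))² dy > ∫ (G(σy) − G(y))² dy`. -/
theorem stmt2
    (P : Measure ℝ) [IsProbabilityMeasure P]
    (hmom : Integrable (fun x => |x|) P)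
    (hnd : ∀ x : ℝ, P ≠ Measure.dirac x)
    (G : ℝ → ℝ) (hG : ∀ y, G y = (P (Iic y)).toReal)
    (σ : ℝ) (hσ : 1 < σ) :
    Integrable (fun y => (G (y / σ) - G y) ^ 2) volume ∧
    Integrable (fun y => (G (σ * y) - G y) ^ 2) volume ∧
    (∫ y, (G (y / σ) - G y) ^ 2) = σ * ∫ y, (G (σ * y) - G y) ^ 2 ∧
    (∫ y, (G (σ * y) - G y) ^ 2) < ∫ y, (G (y / σ) - G y) ^ 2 := by
  have hσ0 : (0 : ℝ) < σ := lt_trans one_pos hσ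
  have hGdef : G = fun y => (P (Iic y)).toReal := funext hG
  have hGmeas : Measurable G := by
    rw [hGdef]
    exact Monotone.measurable fun a b hab =>
      ENNReal.toReal_mono (measure_ne_top _ _) (measure_mono (Iic_subset_Iic.mpr hab))
  -- pointwise: ofReal |G(σy) - G y| = P (Ι y (σ y))
  have habs : ∀ y, ENNReal.ofReal |G (σ * y) - G y| = P (Ι y (σ * y)) := by
    intro y
    rw [hG, hG]
    exact crp_abs_diff_eq P hσ.le y
  have hG01 : ∀ y, 0 ≤ G y ∧ G y ≤ 1 := by
    intro y
    refine ⟨hG y ▸ ENNReal.toReal_nonneg, ?_⟩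
    rw [hG y]
    exact ENNReal.toReal_le_of_le_ofReal one_pos.le (by simpa using prob_le_one)
  have hsqle : ∀ y, (G (σ * y) - G y) ^ 2 ≤ |G (σ * y) - G y| := by
    intro y
    have h1 := hG01 y
    have h2 := hG01 (σ * y)
    have : |G (σ * y) - G y| ≤ 1 := abs_le.mpr ⟨by linarith [h1.2, h2.1], by linarith [h1.1, h2.2]⟩
    nlinarith [sq_abs (G (σ * y) - G y), abs_nonneg (G (σ * y) - G y)]
  -- the moment lintegral is finite
  have hmomfin : ∫⁻ x, ENNReal.ofReal |x| ∂P ≠ ⊤ := by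
    have := (hasFiniteIntegral_iff_ofReal
      (Filter.Eventually.of_forall fun x => abs_nonneg x)).mp hmom.hasFiniteIntegral
    exact this.ne
  -- integrability of the second function
  have hmeas2 : Measurable fun y => (G (σ * y) - G y) ^ 2 :=
    ((hGmeas.comp (measurable_id.const_mul σ)).sub hGmeas).pow_const 2
  have hint2 : Integrable (fun y => (G (σ * y) - G y) ^ 2) volume := by
    refine ⟨hmeas2.aestronglyMeasurable, ?_⟩
    rw [hasFiniteIntegral_iff_ofReal (Filter.Eventually.of_forall fun y => sq_nonneg _)]
    calc ∫⁻ y, ENNReal.ofReal ((G (σ * y) - G y) ^ 2)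
        ≤ ∫⁻ y, P (Ι y (σ * y)) :=
          lintegral_mono fun y => (habs y) ▸ ENNReal.ofReal_le_ofReal (hsqle y)
      _ < ⊤ := by
          rw [crp_key_lint P hσ]
          exact ENNReal.mul_lt_top ENNReal.ofReal_lt_top hmomfin.lt_top
  -- relation between the two functions
  have hcomp : (fun x => (G (σ * x / σ) - G (σ * x)) ^ 2) = fun y => (G (σ * y) - G y) ^ 2 := by
    funext x
    rw [mul_div_cancel_left₀ _ (ne_of_gt hσ0)]
    ring
  have hint1 : Integrable (fun y => (G (y / σ) - G y) ^ 2) volume := by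
    refine (integrable_comp_mul_left_iff (fun y => (G (y / σ) - G y) ^ 2) (ne_of_gt hσ0)).mp ?_
    simpa only [hcomp] using hint2
  have heq : (∫ y, (G (y / σ) - G y) ^ 2) = σ * ∫ y, (G (σ * y) - G y) ^ 2 := by
    have := Measure.integral_comp_mul_left (fun y => (G (y / σ) - G y) ^ 2) σ
    simp only [hcomp, smul_eq_mul, abs_of_pos (inv_pos.mpr hσ0)] at this
    rw [this]
    field_simp
  -- positivity of the second integral
  have hpos : 0 < ∫ y, (G (σ * y) - G y) ^ 2 := by
    rcases (integral_nonneg (f := fun y => (G (σ * y) - G y) ^ 2) fun y => sq_nonneg (G (σ * y) - G y)).lt_or_eq with h | h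
    · exact h
    exfalso
    have hae : (fun y => (G (σ * y) - G y) ^ 2) =ᵐ[volume] 0 :=
      (integral_eq_zero_iff_of_nonneg (fun y => sq_nonneg _) hint2).mp h.symm
    have h0' : ∀ᵐ y, P (Ι y (σ * y)) = 0 := by
      filter_upwards [hae] with y hy
      have hz : G (σ * y) - G y = 0 := by
        have := pow_eq_zero_iff (n := 2) (by norm_num) |>.mp hy
        exact this
      rw [← habs y, hz]
      simp
    have hlz : ∫⁻ y, P (Ι y (σ * y)) = 0 := by
      calc ∫⁻ y, P (Ι y (σ * y)) = ∫⁻ _ : ℝ, 0 := lintegral_congr_ae h0'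
        _ = 0 := lintegral_zero
    rw [crp_key_lint P hσ] at hlz
    rcases mul_eq_zero.mp hlz with hc | hc
    · have h1σ : 1 / σ < 1 := by rw [div_lt_one hσ0]; linarith
      have := ENNReal.ofReal_eq_zero.mp hc
      linarith
    · have hae2 : ∀ᵐ x ∂P, ENNReal.ofReal |x| = 0 :=
        (lintegral_eq_zero_iff measurable_abs.ennreal_ofReal).mp hc
      have hae0 : ∀ᵐ x ∂P, x = 0 := by
        filter_upwards [hae2] with x hx
        have := ENNReal.ofReal_eq_zero.mp hx
        have := abs_nonneg x
        have : |x| = 0 := le_antisymm ‹|x| ≤ 0› ‹0 ≤ |x|›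
        exact abs_eq_zero.mp this
      apply hnd 0
      have hc0 : P ({(0 : ℝ)}ᶜ) = 0 := by
        have hset : {x : ℝ | ¬ x = 0} = ({(0:ℝ)}ᶜ : Set ℝ) := by ext x; simp
        rw [← hset]
        exact hae0
      have h01 : P {(0 : ℝ)} = 1 := by
        have h := measure_add_measure_compl (μ := P) (MeasurableSet.singleton (0 : ℝ))
        rw [hc0, add_zero] at h
        simpa using h
      ext s hs
      rw [Measure.dirac_apply' _ hs]
      by_cases h0s : (0 : ℝ) ∈ s
      · rw [indicator_of_mem h0s]
        refine le_antisymm prob_le_one ?_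
        calc (1 : ℝ≥0∞) = P {(0:ℝ)} := h01.symm
          _ ≤ P s := measure_mono (singleton_subset_iff.mpr h0s)
      · rw [indicator_of_notMem h0s]
        refine le_antisymm ?_ zero_le
        calc P s ≤ P ({(0:ℝ)}ᶜ) := measure_mono fun x hx => by
              simp only [mem_compl_iff, mem_singleton_iff]
              rintro rfl; exact h0s hx
          _ = 0 := hc0
  refine ⟨hint1, hint2, heq, ?_⟩
  rw [heq]
  nlinarith
end

section
/- Let f : ℝ → [0,∞) be a square-integrable probability density (with respect to Lebesgue measure), and for σ>0 let f_σ(x) = σ⁻¹ f(x/σ) denote the density of the scale family member G_σ. Fix σ>1 and assume ∫_ℝ (f_{1/σ}(x) − f(x))² dx > 0. Then ∫_ℝ (f_σ(x) − f(x))² dx = σ⁻¹ ∫_ℝ (f_{1/σ}(x) − f(x))² dx < ∫_ℝ (f_{1/σ}(x) − f(x))² dx. Equivalently, under quadratic loss, the overdispersed forecast with density f_σ incurs strictly smaller expected loss against the target density f than the underdispersed forecast with density f_{1/σ}. -/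
open MeasureTheory

/-- In a scale family of densities, quadratic loss (squared L² distance between
densities) penalizes underdispersion strictly more than overdispersion: with
`f_σ(x) = σ⁻¹ f(x/σ)` and `σ > 1`,
`∫ (f_σ − f)² = σ⁻¹ ∫ (f_{1/σ} − f)² < ∫ (f_{1/σ} − f)²`. -/
theorem stmt3
    (f : ℝ → ℝ) (hf0 : ∀ x, 0 ≤ f x) (hf1 : ∫ x, f x = 1)
    (hf2 : Integrable (fun x => (f x) ^ 2))
    (σ : ℝ) (hσ : 1 < σ)
    (hpos : 0 < ∫ x, (σ * f (σ * x) - f x) ^ 2) :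
    (∫ x, (σ⁻¹ * f (x / σ) - f x) ^ 2) = σ⁻¹ * ∫ x, (σ * f (σ * x) - f x) ^ 2 ∧
    (∫ x, (σ⁻¹ * f (x / σ) - f x) ^ 2) < ∫ x, (σ * f (σ * x) - f x) ^ 2 := by
  have hσ0 : (0:ℝ) < σ := lt_trans one_pos hσ
  have hne : σ ≠ 0 := ne_of_gt hσ0
  have A := MeasureTheory.Measure.integral_comp_mul_left
    (fun x => (σ⁻¹ * f (x / σ) - f x) ^ 2) σ
  have h1 : ∀ x : ℝ, (σ⁻¹ * f (σ * x / σ) - f (σ * x)) ^ 2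
      = σ⁻¹ ^ 2 * (σ * f (σ * x) - f x) ^ 2 := by
    intro x
    rw [mul_div_cancel_left₀ _ hne]
    field_simp
    ring
  rw [show (fun x => (σ⁻¹ * f (σ * x / σ) - f (σ * x)) ^ 2)
      = (fun x => σ⁻¹ ^ 2 * (σ * f (σ * x) - f x) ^ 2) from funext h1] at A
  rw [MeasureTheory.integral_const_mul] at A
  have habs : |σ⁻¹| = σ⁻¹ := abs_of_pos (inv_pos.mpr hσ0)
  rw [habs, smul_eq_mul] at A
  have key : (∫ x, (σ⁻¹ * f (x / σ) - f x) ^ 2)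
      = σ⁻¹ * ∫ x, (σ * f (σ * x) - f x) ^ 2 := by
    have hinv : σ⁻¹ ≠ 0 := inv_ne_zero hne
    have := A
    field_simp at this ⊢
    nlinarith [this]
  refine ⟨key, ?_⟩
  rw [key]
  have hlt : σ⁻¹ < 1 := inv_lt_one_of_one_lt₀ hσ
  nlinarith [hpos]
end

section
/- Let f : ℝ → [0,∞) be a square-integrable probability density with ∫_ℝ f² > 0, and for σ>0 let f_σ(x) = σ⁻¹ f(x/σ). Then for every σ>0, (∫_ℝ f_σ(x) f(x) dx) · (∫_ℝ f_σ(x)² dx)^{−1/2} = (∫_ℝ f_{1/σ}(x) f(x) dx) · (∫_ℝ f_{1/σ}(x)² dx)^{−1/2}. Equivalently, the expected spherical loss ℓ(F,G) = −(∫ f_F g)(∫ f_F²)^{−1/2} over the scale family satisfies ℓ(G_σ, G) = ℓ(G_{1/σ}, G) for all σ>0: spherical loss penalizes overestimating and underestimating the scale symmetrically. -/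
open MeasureTheory

/-- Spherical loss penalizes overestimating and underestimating the scale
symmetrically: with `f_σ(x) = σ⁻¹ f(x/σ)`, for all `σ > 0`,
`(∫ f_σ f)·(∫ f_σ²)^{-1/2} = (∫ f_{1/σ} f)·(∫ f_{1/σ}²)^{-1/2}`. -/
theorem stmt4
    (f : ℝ → ℝ) (hf0 : ∀ x, 0 ≤ f x) (hf1 : ∫ x, f x = 1)
    (hf2 : Integrable (fun x => (f x) ^ 2))
    (hpos : 0 < ∫ x, (f x) ^ 2)
    (σ : ℝ) (hσ : 0 < σ) :
    (∫ x, (σ⁻¹ * f (x / σ)) * f x) * (∫ x, (σ⁻¹ * f (x / σ)) ^ 2) ^ (-(1 : ℝ) / 2)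
      = (∫ x, (σ * f (σ * x)) * f x) * (∫ x, (σ * f (σ * x)) ^ 2) ^ (-(1 : ℝ) / 2) := by
  have hσ' : σ ≠ 0 := hσ.ne'
  have habs : |σ| = σ := abs_of_pos hσ
  have habs' : |σ⁻¹| = σ⁻¹ := abs_of_pos (inv_pos.mpr hσ)
  set C := ∫ x, (f x) ^ 2 with hC
  set B := ∫ x, f x * f (σ * x) with hB
  have hCnn : 0 ≤ C := le_of_lt hpos
  have h1 : (∫ x, (σ⁻¹ * f (x / σ)) * f x) = B := by
    calc ∫ x, (σ⁻¹ * f (x / σ)) * f x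
        = ∫ x, σ⁻¹ * (fun y => f y * f (σ * y)) (x / σ) := by
          congr 1; funext x
          have hx : σ * (x / σ) = x := by field_simp
          simp only [hx]; ring
      _ = σ⁻¹ * ∫ x, (fun y => f y * f (σ * y)) (x / σ) := integral_const_mul _ _
      _ = σ⁻¹ * (|σ| • ∫ y, f y * f (σ * y)) := by congr 1; exact Measure.integral_comp_div (fun y => f y * f (σ * y)) σ
      _ = B := by rw [habs, smul_eq_mul, ← hB]; field_simp
  have h2 : (∫ x, (σ⁻¹ * f (x / σ)) ^ 2) = σ⁻¹ * C := by
    calc ∫ x, (σ⁻¹ * f (x / σ)) ^ 2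
        = ∫ x, σ⁻¹ ^ 2 * (fun y => (f y) ^ 2) (x / σ) := by
          congr 1; funext x; simp only [mul_pow]
      _ = σ⁻¹ ^ 2 * ∫ x, (fun y => (f y) ^ 2) (x / σ) := integral_const_mul _ _
      _ = σ⁻¹ ^ 2 * (|σ| • C) := by congr 1; exact Measure.integral_comp_div (fun y => (f y) ^ 2) σ
      _ = σ⁻¹ * C := by rw [habs, smul_eq_mul]; field_simp
  have h3 : (∫ x, (σ * f (σ * x)) * f x) = σ * B := by
    calc ∫ x, (σ * f (σ * x)) * f x
        = ∫ x, σ * (f x * f (σ * x)) := by congr 1; funext x; ring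
      _ = σ * B := integral_const_mul _ _
  have h4 : (∫ x, (σ * f (σ * x)) ^ 2) = σ * C := by
    calc ∫ x, (σ * f (σ * x)) ^ 2
        = ∫ x, σ ^ 2 * (fun y => (f y) ^ 2) (σ * x) := by
          congr 1; funext x; simp only [mul_pow]
      _ = σ ^ 2 * ∫ x, (fun y => (f y) ^ 2) (σ * x) := integral_const_mul _ _
      _ = σ ^ 2 * (|σ⁻¹| • C) := by congr 1; exact Measure.integral_comp_mul_left (fun y => (f y) ^ 2) σ
      _ = σ * C := by rw [habs', smul_eq_mul]; field_simp
  rw [h1, h2, h3, h4,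
    Real.mul_rpow (le_of_lt (inv_pos.mpr hσ)) hCnn, Real.mul_rpow hσ.le hCnn]
  have hk : (σ⁻¹ : ℝ) ^ (-(1 : ℝ) / 2) = σ * σ ^ (-(1 : ℝ) / 2) := by
    rw [Real.inv_rpow hσ.le, ← Real.rpow_neg hσ.le,
      show -(-(1 : ℝ) / 2) = 1 + (-(1 : ℝ) / 2) by ring, Real.rpow_add hσ, Real.rpow_one]
  rw [hk]; ring
end

section
/- Fix β ∈ (0,2) and d ≥ 1. Let μ be a probability measure on ℝ^d with ∫ ‖x‖₂^β dμ(x) < ∞, and for σ>0 let μ_σ be the pushforward of μ under x ↦ σx. Define the energy distance D(ν,μ) = ∫∫ ‖x−y‖₂^β dν(x)dμ(y) − ½ ∫∫ ‖x−x'‖₂^β dν(x)dν(x') − ½ ∫∫ ‖y−y'‖₂^β dμ(y)dμ(y'). Fix σ>1 and suppose D(μ_{1/σ}, μ) > 0. Then D(μ_σ, μ) = σ^β · D(μ_{1/σ}, μ) > D(μ_{1/σ}, μ). Equivalently, under energy loss with exponent β, the overdispersed forecast μ_σ incurs strictly larger expected loss against the target μ than the underdispersed forecast μ_{1/σ}.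 -/
open MeasureTheory Set

section Aux

variable {n : ℕ}

local notation "E" => EuclideanSpace ℝ (Fin n)

lemma aux_rpow_add_le {β : ℝ} (hβ : 0 ≤ β) {a b : ℝ} (ha : 0 ≤ a) (hb : 0 ≤ b) :
    (a + b) ^ β ≤ 2 ^ β * (a ^ β + b ^ β) := by
  have h1 : a + b ≤ 2 * max a b := by
    rcases max_cases a b with ⟨h, h'⟩ | ⟨h, h'⟩ <;> rw [h] <;> linarith
  have h2 : (a + b) ^ β ≤ (2 * max a b) ^ β :=
    Real.rpow_le_rpow (by positivity) h1 hβ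
  have h3 : (2 * max a b) ^ β = 2 ^ β * (max a b) ^ β :=
    Real.mul_rpow (by norm_num) (le_max_of_le_left ha)
  have h4 : (max a b) ^ β ≤ a ^ β + b ^ β := by
    rcases max_cases a b with ⟨h, _⟩ | ⟨h, _⟩ <;> rw [h]
    · nlinarith [Real.rpow_nonneg hb β]
    · nlinarith [Real.rpow_nonneg ha β]
  calc (a + b) ^ β ≤ 2 ^ β * (max a b) ^ β := h3 ▸ h2
    _ ≤ 2 ^ β * (a ^ β + b ^ β) := mul_le_mul_of_nonneg_left h4 (by positivity)

lemma aux_cont {β : ℝ} (hβ : 0 < β) : Continuous fun x : ℝ => x ^ β := by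
  rw [continuous_iff_continuousAt]
  exact fun x => Real.continuousAt_rpow_const x β (Or.inr hβ.le)

lemma aux_integrable_fst {β : ℝ} (hβ : 0 < β) (μ : Measure E) [IsProbabilityMeasure μ]
    (hmom : Integrable (fun x : E => ‖x‖ ^ β) μ) :
    Integrable (fun p : E × E => ‖p.1‖ ^ β) (μ.prod μ) := by
  have hmeas : AEStronglyMeasurable (fun x : E => ‖x‖ ^ β) μ :=
    ((aux_cont hβ).comp continuous_norm).aestronglyMeasurable
  have : Integrable ((fun x : E => ‖x‖ ^ β) ∘ Prod.fst) (μ.prod μ) := by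
    rw [← integrable_map_measure (by rw [Measure.map_fst_prod]; simpa using hmeas)
      measurable_fst.aemeasurable]
    rw [Measure.map_fst_prod]
    simpa using hmom
  exact this

lemma aux_integrable_snd {β : ℝ} (hβ : 0 < β) (μ : Measure E) [IsProbabilityMeasure μ]
    (hmom : Integrable (fun x : E => ‖x‖ ^ β) μ) :
    Integrable (fun p : E × E => ‖p.2‖ ^ β) (μ.prod μ) := by
  have hmeas : AEStronglyMeasurable (fun x : E => ‖x‖ ^ β) μ :=
    ((aux_cont hβ).comp continuous_norm).aestronglyMeasurable
  have : Integrable ((fun x : E => ‖x‖ ^ β) ∘ Prod.snd) (μ.prod μ) := by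
    rw [← integrable_map_measure (by rw [Measure.map_snd_prod]; simpa using hmeas)
      measurable_snd.aemeasurable]
    rw [Measure.map_snd_prod]
    simpa using hmom
  exact this

lemma aux_integrable_prod {β : ℝ} (hβ : 0 < β) (μ : Measure E) [IsProbabilityMeasure μ]
    (hmom : Integrable (fun x : E => ‖x‖ ^ β) μ) (t : ℝ) :
    Integrable (fun p : E × E => ‖p.1 - t • p.2‖ ^ β) (μ.prod μ) := by
  have hcont : Continuous fun p : E × E => ‖p.1 - t • p.2‖ ^ β :=
    (aux_cont hβ).comp ((continuous_fst.sub (continuous_snd.const_smul t)).norm)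
  refine Integrable.mono' (g := fun p : E × E => 2 ^ β * ‖p.1‖ ^ β + (2 ^ β * |t| ^ β) * ‖p.2‖ ^ β)
    ?_ hcont.aestronglyMeasurable ?_
  · exact ((aux_integrable_fst hβ μ hmom).const_mul _).add
      ((aux_integrable_snd hβ μ hmom).const_mul _)
  · refine Filter.Eventually.of_forall fun p => ?_
    have h0 : ‖p.1 - t • p.2‖ ≤ ‖p.1‖ + |t| * ‖p.2‖ := by
      calc ‖p.1 - t • p.2‖ ≤ ‖p.1‖ + ‖t • p.2‖ := norm_sub_le _ _
        _ = ‖p.1‖ + |t| * ‖p.2‖ := by rw [norm_smul, Real.norm_eq_abs]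
    have h1 : ‖p.1 - t • p.2‖ ^ β ≤ (‖p.1‖ + |t| * ‖p.2‖) ^ β :=
      Real.rpow_le_rpow (norm_nonneg _) h0 hβ.le
    have h2 : (‖p.1‖ + |t| * ‖p.2‖) ^ β ≤ 2 ^ β * (‖p.1‖ ^ β + (|t| * ‖p.2‖) ^ β) :=
      aux_rpow_add_le hβ.le (norm_nonneg _) (by positivity)
    have h3 : (|t| * ‖p.2‖) ^ β = |t| ^ β * ‖p.2‖ ^ β :=
      Real.mul_rpow (abs_nonneg t) (norm_nonneg _)
    rw [Real.norm_eq_abs, abs_of_nonneg (Real.rpow_nonneg (norm_nonneg _) β)]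
    calc ‖p.1 - t • p.2‖ ^ β ≤ 2 ^ β * (‖p.1‖ ^ β + (|t| * ‖p.2‖) ^ β) := le_trans h1 h2
      _ = 2 ^ β * ‖p.1‖ ^ β + (2 ^ β * |t| ^ β) * ‖p.2‖ ^ β := by rw [h3]; ring

end Aux

set_option maxHeartbeats 1000000 in
/-- In a scale family on ℝ^d, energy loss with exponent `β ∈ (0,2)` penalizes
overdispersion strictly more than underdispersion:
`D(μ_σ, μ) = σ^β · D(μ_{1/σ}, μ) > D(μ_{1/σ}, μ)` for `σ > 1`, where `D` is the
(generalized) energy distance. -/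
theorem stmt5
    (n : ℕ) (hn : 1 ≤ n) (β : ℝ) (hβ : β ∈ Ioo (0 : ℝ) 2)
    (μ : Measure (EuclideanSpace ℝ (Fin n))) [IsProbabilityMeasure μ]
    (hmom : Integrable (fun x => ‖x‖ ^ β) μ)
    (D : Measure (EuclideanSpace ℝ (Fin n)) → Measure (EuclideanSpace ℝ (Fin n)) → ℝ)
    (hD : ∀ ν μ' : Measure (EuclideanSpace ℝ (Fin n)),
      D ν μ' = (∫ x, ∫ y, ‖x - y‖ ^ β ∂μ' ∂ν)
        - (1 / 2) * (∫ x, ∫ x', ‖x - x'‖ ^ β ∂ν ∂ν)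
        - (1 / 2) * (∫ y, ∫ y', ‖y - y'‖ ^ β ∂μ' ∂μ'))
    (σ : ℝ) (hσ : 1 < σ)
    (hposD : 0 < D (μ.map (fun x => σ⁻¹ • x)) μ) :
    D (μ.map (fun x => σ • x)) μ = σ ^ β * D (μ.map (fun x => σ⁻¹ • x)) μ ∧
    D (μ.map (fun x => σ⁻¹ • x)) μ < D (μ.map (fun x => σ • x)) μ := by
  set E := EuclideanSpace ℝ (Fin n)
  have hβ0 : (0:ℝ) < β := hβ.1
  have hσ0 : (0:ℝ) < σ := lt_trans one_pos hσ
  have hσβ : (1:ℝ) < σ ^ β := Real.one_lt_rpow hσ hβ0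
  have hσβ0 : (0:ℝ) < σ ^ β := lt_trans one_pos hσβ
  -- continuity / measurability facts
  have hcont2 : ∀ t : ℝ, Continuous fun p : E × E => ‖p.1 - t • p.2‖ ^ β := fun t =>
    (aux_cont hβ0).comp ((continuous_fst.sub (continuous_snd.const_smul t)).norm)
  have hcontsub : Continuous fun p : E × E => ‖p.1 - p.2‖ ^ β :=
    (aux_cont hβ0).comp ((continuous_fst.sub continuous_snd).norm)
  have hsmul : ∀ t : ℝ, Measurable fun x : E => t • x := fun t =>
    measurable_id.const_smul t
  -- inner integral rewriting under map measure
  have hinner : ∀ (t : ℝ) (x : E),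
      (∫ y, ‖x - y‖ ^ β ∂(μ.map (fun z : E => t • z))) = ∫ y, ‖x - t • y‖ ^ β ∂μ := by
    intro t x
    have hsm : AEStronglyMeasurable (fun y : E => ‖x - y‖ ^ β) (μ.map (fun z : E => t • z)) :=
      (((aux_cont hβ0).comp ((continuous_const.sub continuous_id).norm))).aestronglyMeasurable
    rw [integral_map (hsmul t).aemeasurable hsm]
  -- measurability of the inner-integral functions
  have hmeasI : ∀ t : ℝ, StronglyMeasurable fun x : E => ∫ y, ‖x - t • y‖ ^ β ∂μ := by
    intro t
    exact (hcont2 t).stronglyMeasurable.integral_prod_right'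
  have hmeasI' : StronglyMeasurable fun x : E => ∫ y, ‖x - y‖ ^ β ∂μ :=
    hcontsub.stronglyMeasurable.integral_prod_right'
  -- cross term: ∫∫ ‖x - y‖ d μ d(map t) = ∫∫ ‖t•x - y‖ dμ dμ
  have hcross : ∀ t : ℝ,
      (∫ x, ∫ y, ‖x - y‖ ^ β ∂μ ∂(μ.map (fun z : E => t • z)))
        = ∫ x, ∫ y, ‖t • x - y‖ ^ β ∂μ ∂μ := by
    intro t
    have hsm : AEStronglyMeasurable (fun x : E => ∫ y, ‖x - y‖ ^ β ∂μ)
        (μ.map (fun z : E => t • z)) := hmeasI'.aestronglyMeasurable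
    rw [integral_map (hsmul t).aemeasurable hsm]
  -- self term scaling
  have hself : ∀ t : ℝ, 0 < t →
      (∫ x, ∫ y, ‖x - y‖ ^ β ∂(μ.map (fun z : E => t • z)) ∂(μ.map (fun z : E => t • z)))
        = t ^ β * ∫ x, ∫ y, ‖x - y‖ ^ β ∂μ ∂μ := by
    intro t ht
    have step1 : (∫ x, ∫ y, ‖x - y‖ ^ β ∂(μ.map (fun z : E => t • z)) ∂(μ.map (fun z : E => t • z)))
        = ∫ x, ∫ y, ‖x - t • y‖ ^ β ∂μ ∂(μ.map (fun z : E => t • z)) := by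
      congr 1; ext x; exact hinner t x
    have hsm : AEStronglyMeasurable (fun x : E => ∫ y, ‖x - t • y‖ ^ β ∂μ)
        (μ.map (fun z : E => t • z)) := (hmeasI t).aestronglyMeasurable
    rw [step1, integral_map (hsmul t).aemeasurable hsm]
    have : ∀ x y : E, ‖t • x - t • y‖ ^ β = t ^ β * ‖x - y‖ ^ β := by
      intro x y
      rw [← smul_sub, norm_smul, Real.norm_eq_abs, abs_of_pos ht,
        Real.mul_rpow ht.le (norm_nonneg _)]
    simp only [this, integral_const_mul]
    rfl
  -- key swap identity: A σ = σ^β * A σ⁻¹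
  have hswap : (∫ x, ∫ y, ‖σ • x - y‖ ^ β ∂μ ∂μ)
      = σ ^ β * ∫ x, ∫ y, ‖σ⁻¹ • x - y‖ ^ β ∂μ ∂μ := by
    have e1 : ∀ x y : E, ‖σ • x - y‖ ^ β = σ ^ β * ‖x - σ⁻¹ • y‖ ^ β := by
      intro x y
      have : σ • (x - σ⁻¹ • y) = σ • x - y := by
        rw [smul_sub, smul_inv_smul₀ (ne_of_gt hσ0)]
      rw [← this, norm_smul, Real.norm_eq_abs, abs_of_pos hσ0,
        Real.mul_rpow hσ0.le (norm_nonneg _)]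
    have hInt : Integrable (Function.uncurry fun x y : E => ‖x - σ⁻¹ • y‖ ^ β) (μ.prod μ) :=
      aux_integrable_prod hβ0 μ hmom σ⁻¹
    have e2 : (∫ x, ∫ y, ‖x - σ⁻¹ • y‖ ^ β ∂μ ∂μ) = ∫ y, ∫ x, ‖x - σ⁻¹ • y‖ ^ β ∂μ ∂μ :=
      integral_integral_swap hInt
    have e3 : (∫ y, ∫ x, ‖x - σ⁻¹ • y‖ ^ β ∂μ ∂μ) = ∫ x, ∫ y, ‖σ⁻¹ • x - y‖ ^ β ∂μ ∂μ := by
      congr 1; ext y; congr 1; ext x; rw [norm_sub_rev]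
    simp only [e1, integral_const_mul]
    rw [e2, e3]
  -- putting it together
  set A : ℝ := ∫ x, ∫ y, ‖σ⁻¹ • x - y‖ ^ β ∂μ ∂μ with hA
  set S : ℝ := ∫ x, ∫ y, ‖x - y‖ ^ β ∂μ ∂μ with hS
  have hinvβ : (σ⁻¹) ^ β = (σ ^ β)⁻¹ := Real.inv_rpow hσ0.le β
  have hDσ : D (μ.map (fun x : E => σ • x)) μ
      = σ ^ β * A - (1/2) * (σ ^ β * S) - (1/2) * S := by
    rw [hD, hcross σ, hself σ hσ0, hswap]
  have hDinv : D (μ.map (fun x : E => σ⁻¹ • x)) μ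
      = A - (1/2) * ((σ ^ β)⁻¹ * S) - (1/2) * S := by
    rw [hD, hcross σ⁻¹, hself σ⁻¹ (inv_pos.mpr hσ0), hinvβ]
  have hkey : D (μ.map (fun x : E => σ • x)) μ = σ ^ β * D (μ.map (fun x : E => σ⁻¹ • x)) μ := by
    rw [hDσ, hDinv]
    field_simp
    ring
  refine ⟨hkey, ?_⟩
  rw [hkey]
  nlinarith [hposD, hσβ]
end

section
/- Let G be a probability measure on ℝ with finite second moment and strictly positive variance; write m = ∫ x dG and v = Var(G) > 0. For σ>0, the scale family member G_σ (pushforward of G under x ↦ σx) has mean σm and variance σ²v, and the expected Dawid–Sebastiani loss of a forecast F against target G is ℓ(F,G) = log Var(F) + (Var(G) + (mean(G) − mean(F))²)/Var(F). Then for every σ>1, ℓ(G_σ, G) < ℓ(G_{1/σ}, G); explicitly, log(σ²v) + (v + (m − σm)²)/(σ²v) < log(v/σ²) + (v + (m − m/σ)²)·σ²/v. -/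
open MeasureTheory ProbabilityTheory

/-- In a scale family, the Dawid–Sebastiani loss penalizes underdispersion
strictly more than overdispersion: the scale member `G_σ` has mean `σm` and
variance `σ²v`, and for `σ > 1` the expected DS loss of `G_σ` against `G` is
strictly smaller than that of `G_{1/σ}`. -/
theorem stmt6
    (G : Measure ℝ) [IsProbabilityMeasure G]
    (hmom : MemLp id 2 G)
    (m v : ℝ) (hm : m = ∫ x, x ∂G) (hv : v = variance id G) (hvpos : 0 < v)
    (σ : ℝ) (hσ : 1 < σ) :
    (∫ x, x ∂(G.map (fun x => σ * x)) = σ * m) ∧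
    (variance id (G.map (fun x => σ * x)) = σ ^ 2 * v) ∧
    Real.log (σ ^ 2 * v) + (v + (m - σ * m) ^ 2) / (σ ^ 2 * v)
      < Real.log (v / σ ^ 2) + (v + (m - m / σ) ^ 2) * σ ^ 2 / v := by
  have hσ0 : 0 < σ := lt_trans one_pos hσ
  have hf : Measurable fun x : ℝ => σ * x := measurable_const_mul σ
  have hmean : ∫ x, x ∂(G.map (fun x => σ * x)) = σ * m := by
    rw [integral_map (f := fun y : ℝ => y) hf.aemeasurable
      measurable_id.aestronglyMeasurable, hm, integral_const_mul]
  refine ⟨hmean, ?_, ?_⟩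
  · have hev : evariance id (G.map (fun x => σ * x)) = evariance (fun x => σ * x) G := by
      rw [evariance, evariance, lintegral_map (by measurability) hf]
      congr 1
      funext x
      simp only [id]
      rw [hmean, integral_const_mul, ← hm]
    have h2 : variance (fun x => σ * x) G = σ ^ 2 * variance id G := variance_const_mul σ id G
    rw [variance, hev, ← variance, h2, hv]
  · have hlogσ : 0 < Real.log σ := Real.log_pos hσ
    have hkey : 4 * Real.log σ < σ ^ 2 - 1 / σ ^ 2 := by
      have hy : 0 < 2 * Real.log σ := by linarith
      have := Real.self_lt_sinh_iff.mpr hy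
      rw [Real.sinh_eq] at this
      have he1 : Real.exp (2 * Real.log σ) = σ ^ 2 := by
        rw [show 2 * Real.log σ = Real.log σ + Real.log σ by ring, Real.exp_add,
          Real.exp_log hσ0]
        ring
      have he2 : Real.exp (-(2 * Real.log σ)) = 1 / σ ^ 2 := by
        rw [Real.exp_neg, he1, one_div]
      rw [he1, he2] at this
      linarith
    have hlog1 : Real.log (σ ^ 2 * v) = 2 * Real.log σ + Real.log v := by
      rw [Real.log_mul (by positivity) (ne_of_gt hvpos), Real.log_pow]
      push_cast; ring
    have hlog2 : Real.log (v / σ ^ 2) = Real.log v - 2 * Real.log σ := by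
      rw [Real.log_div (ne_of_gt hvpos) (by positivity), Real.log_pow]
      push_cast; ring
    rw [hlog1, hlog2]
    have hσ2 : (1:ℝ) < σ ^ 2 := by nlinarith
    have hq : (m - σ * m) ^ 2 = σ ^ 2 * (m - m / σ) ^ 2 := by
      field_simp
      ring
    have hmsq : 0 ≤ (m - m / σ) ^ 2 := sq_nonneg _
    have e1 : (v + (m - σ * m) ^ 2) / (σ ^ 2 * v)
        = 1 / σ ^ 2 + (m - m / σ) ^ 2 / v := by
      rw [hq]; field_simp
    have e2 : (v + (m - m / σ) ^ 2) * σ ^ 2 / v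
        = σ ^ 2 + σ ^ 2 * ((m - m / σ) ^ 2 / v) := by
      field_simp
    rw [e1, e2]
    have hmono : (m - m / σ) ^ 2 / v ≤ σ ^ 2 * ((m - m / σ) ^ 2 / v) := by
      nlinarith [div_nonneg hmsq hvpos.le]
    linarith
end

section
/- Let A : (0,∞) → ℝ be twice continuously differentiable and let d_A(y,x) = A(y) − A(x) − A'(x)(y−x) be its Bregman divergence. Fix η>0 and θ>1. Then: (1) if u ↦ u³·A''(u) is strictly increasing on (0,∞), then d_A(θη, η) > d_A(η/θ, η); (2) if u ↦ u³·A''(u) is strictly decreasing on (0,∞), then d_A(θη, η) < d_A(η/θ, η); (3) if u ↦ u³·A''(u) is constant on (0,∞), then d_A(θη, η) = d_A(η/θ, η). A key ingredient is the identity ∫_1^θ ∫_1^v u⁻³ du dv = (θ−1)²/(2θ) = ∫_{1/θ}^1 ∫_v^1 u⁻³ du dv. -/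
open Set

open intervalIntegral


lemma pos_of_mem_uIcc {a b u : ℝ} (ha : 0 < a) (hb : 0 < b) (hu : u ∈ uIcc a b) : 0 < u :=
  lt_of_lt_of_le (lt_min ha hb) hu.1

lemma hderiv_inv2 {u : ℝ} (hu : u ≠ 0) :
    HasDerivAt (fun t : ℝ => (t ^ 2)⁻¹) (-(2 * u) / (u ^ 2) ^ 2) u := by
  have := (hasDerivAt_pow 2 u).inv (pow_ne_zero 2 hu)
  refine this.congr_deriv ?_
  push_cast
  ring

/-- `∫ (y - u) * (c * u⁻³)` on positive intervals. -/
lemma int_weight (y a b c : ℝ) (ha : 0 < a) (hb : 0 < b) :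
    ∫ u in a..b, (y - u) * (c * (u ^ 3)⁻¹)
      = c * ((b⁻¹ - y * (b ^ 2)⁻¹ / 2) - (a⁻¹ - y * (a ^ 2)⁻¹ / 2)) := by
  have key : ∀ u ∈ uIcc a b,
      HasDerivAt (fun t : ℝ => c * (t⁻¹ - y * (t ^ 2)⁻¹ / 2)) ((y - u) * (c * (u ^ 3)⁻¹)) u := by
    intro u hu
    have h0 : 0 < u := pos_of_mem_uIcc ha hb hu
    have hu' : u ≠ 0 := ne_of_gt h0
    have h1 : HasDerivAt (fun t : ℝ => t⁻¹) (-(u ^ 2)⁻¹) u := hasDerivAt_inv hu'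
    have := (h1.sub (((hderiv_inv2 hu').const_mul y).div_const 2)).const_mul c
    refine this.congr_deriv ?_
    field_simp
    ring
  have hc : ContinuousOn (fun u : ℝ => (y - u) * (c * (u ^ 3)⁻¹)) (uIcc a b) := by
    apply ContinuousOn.mul (by fun_prop)
    apply ContinuousOn.mul continuousOn_const
    apply ContinuousOn.inv₀ (by fun_prop)
    intro u hu
    exact pow_ne_zero 3 (ne_of_gt (pos_of_mem_uIcc ha hb hu))
  rw [integral_eq_sub_of_hasDerivAt key (hc.intervalIntegrable)]
  ring

/-- `∫ (u - y) * (c * u⁻³)` on positive intervals. -/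
lemma int_weight' (y a b c : ℝ) (ha : 0 < a) (hb : 0 < b) :
    ∫ u in a..b, (u - y) * (c * (u ^ 3)⁻¹)
      = c * ((y * (b ^ 2)⁻¹ / 2 - b⁻¹) - (y * (a ^ 2)⁻¹ / 2 - a⁻¹)) := by
  have : ∫ u in a..b, (u - y) * (c * (u ^ 3)⁻¹)
      = ∫ u in a..b, (y - u) * ((-c) * (u ^ 3)⁻¹) := by
    apply integral_congr
    intro u _
    ring
  rw [this, int_weight y a b (-c) ha hb]
  ring

lemma int_inv3 (a b : ℝ) (ha : 0 < a) (hb : 0 < b) :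
    ∫ u in a..b, (u ^ 3)⁻¹ = (a ^ 2)⁻¹ / 2 - (b ^ 2)⁻¹ / 2 := by
  have key : ∀ u ∈ uIcc a b,
      HasDerivAt (fun t : ℝ => -(t ^ 2)⁻¹ / 2) ((u ^ 3)⁻¹) u := by
    intro u hu
    have h0 : 0 < u := pos_of_mem_uIcc ha hb hu
    have hu' : u ≠ 0 := ne_of_gt h0
    have := ((hderiv_inv2 hu').neg).div_const 2
    refine this.congr_deriv ?_
    field_simp
  have hc : ContinuousOn (fun u : ℝ => (u ^ 3)⁻¹) (uIcc a b) := by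
    apply ContinuousOn.inv₀ (by fun_prop)
    intro u hu
    exact pow_ne_zero 3 (ne_of_gt (pos_of_mem_uIcc ha hb hu))
  rw [integral_eq_sub_of_hasDerivAt key (hc.intervalIntegrable)]
  ring

lemma int_halfsub (a b : ℝ) (ha : 0 < a) (hb : 0 < b) :
    ∫ v in a..b, (1 / 2 - (v ^ 2)⁻¹ / 2) = (b / 2 + b⁻¹ / 2) - (a / 2 + a⁻¹ / 2) := by
  have key : ∀ u ∈ uIcc a b,
      HasDerivAt (fun t : ℝ => t / 2 + t⁻¹ / 2) (1 / 2 - (u ^ 2)⁻¹ / 2) u := by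
    intro u hu
    have h0 : 0 < u := pos_of_mem_uIcc ha hb hu
    have hu' : u ≠ 0 := ne_of_gt h0
    have h1 : HasDerivAt (fun t : ℝ => t⁻¹) (-(u ^ 2)⁻¹) u := hasDerivAt_inv hu'
    have := ((hasDerivAt_id u).div_const 2).add (h1.div_const 2)
    refine this.congr_deriv ?_
    ring
  have hc : ContinuousOn (fun v : ℝ => (1 / 2 - (v ^ 2)⁻¹ / 2)) (uIcc a b) := by
    apply ContinuousOn.sub continuousOn_const
    apply ContinuousOn.div_const
    apply ContinuousOn.inv₀ (by fun_prop)
    intro u hu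
    exact pow_ne_zero 2 (ne_of_gt (pos_of_mem_uIcc ha hb hu))
  rw [integral_eq_sub_of_hasDerivAt key (hc.intervalIntegrable)]

/-- Taylor's formula with integral remainder at second order, on `(0,∞)`. -/
lemma taylor2 (A A' A'' : ℝ → ℝ)
    (hA' : ∀ x ∈ Ioi (0 : ℝ), HasDerivAt A (A' x) x)
    (hA'' : ∀ x ∈ Ioi (0 : ℝ), HasDerivAt A' (A'' x) x)
    (hcont : ContinuousOn A'' (Ioi 0))
    (x y : ℝ) (hx : 0 < x) (hy : 0 < y) :
    A y - A x - A' x * (y - x) = ∫ u in x..y, (y - u) * A'' u := by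
  have hsub : uIcc x y ⊆ Ioi (0 : ℝ) := fun u hu => pos_of_mem_uIcc hx hy hu
  have key : ∀ u ∈ uIcc x y,
      HasDerivAt (fun t : ℝ => A t + A' t * (y - t)) ((y - u) * A'' u) u := by
    intro u hu
    have h0 : u ∈ Ioi (0 : ℝ) := hsub hu
    have h1 := hA' u h0
    have h2 : HasDerivAt (fun t : ℝ => A' t * (y - t))
        (A'' u * (y - u) + A' u * (-1)) u :=
      (hA'' u h0).mul (((hasDerivAt_id u).const_sub y))
    have := h1.add h2
    refine this.congr_deriv ?_
    ring
  have hc : ContinuousOn (fun u : ℝ => (y - u) * A'' u) (uIcc x y) :=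
    (by fun_prop : ContinuousOn (fun u : ℝ => y - u) (uIcc x y)).mul (hcont.mono hsub)
  rw [integral_eq_sub_of_hasDerivAt key (hc.intervalIntegrable)]
  ring

set_option maxHeartbeats 2000000 in
/-- Asymmetry of the Bregman divergence of a log-partition function on `(0,∞)`
(Lemma "acceleration" of the paper, case `Ω = (0,∞)`): the sign of
`d_A(θη, η) − d_A(η/θ, η)` is governed by the monotonicity of `u ↦ u³ A''(u)`.
A key ingredient is `∫_1^θ ∫_1^v u⁻³ du dv = (θ−1)²/(2θ) = ∫_{1/θ}^1 ∫_v^1 u⁻³ du dv`. -/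
theorem stmt8
    (A A' A'' : ℝ → ℝ)
    (hA' : ∀ x ∈ Ioi (0 : ℝ), HasDerivAt A (A' x) x)
    (hA'' : ∀ x ∈ Ioi (0 : ℝ), HasDerivAt A' (A'' x) x)
    (hcont : ContinuousOn A'' (Ioi 0))
    (dA : ℝ → ℝ → ℝ) (hdA : ∀ y x, dA y x = A y - A x - A' x * (y - x))
    (η θ : ℝ) (hη : 0 < η) (hθ : 1 < θ) :
    (StrictMonoOn (fun u => u ^ 3 * A'' u) (Ioi 0) → dA (η / θ) η < dA (θ * η) η) ∧
    (StrictAntiOn (fun u => u ^ 3 * A'' u) (Ioi 0) → dA (θ * η) η < dA (η / θ) η) ∧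
    ((∀ u ∈ Ioi (0 : ℝ), ∀ v ∈ Ioi (0 : ℝ), u ^ 3 * A'' u = v ^ 3 * A'' v) →
      dA (θ * η) η = dA (η / θ) η) ∧
    (∫ v in (1 : ℝ)..θ, ∫ u in (1 : ℝ)..v, (u ^ 3)⁻¹) = (θ - 1) ^ 2 / (2 * θ) ∧
    (∫ v in θ⁻¹..(1 : ℝ), ∫ u in v..(1 : ℝ), (u ^ 3)⁻¹) = (θ - 1) ^ 2 / (2 * θ) := by
  have hθ0 : (0 : ℝ) < θ := lt_trans one_pos hθ
  have hθη : η < θ * η := by nlinarith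
  have ha0 : 0 < η / θ := by positivity
  have haη : η / θ < η := by rw [div_lt_iff₀ hθ0]; nlinarith
  have hbη : 0 < θ * η := by positivity
  set c : ℝ := η ^ 3 * A'' η with hc_def
  set E : ℝ := c * (θ - 1) ^ 2 / (2 * θ * η) with hE_def
  -- representations of the two divergences
  have T1 : dA (θ * η) η = ∫ u in η..(θ * η), (θ * η - u) * A'' u := by
    rw [hdA]; exact taylor2 A A' A'' hA' hA'' hcont η (θ * η) hη hbη
  have T2 : dA (η / θ) η = ∫ u in (η / θ)..η, (u - η / θ) * A'' u := by
    rw [hdA, taylor2 A A' A'' hA' hA'' hcont η (η / θ) hη ha0,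
      integral_symm (η / θ) η, ← integral_neg]
    apply integral_congr
    intro u _
    ring
  -- baseline integrals
  have B1 : (∫ u in η..(θ * η), (θ * η - u) * (c * (u ^ 3)⁻¹)) = E := by
    rw [int_weight (θ * η) η (θ * η) c hη hbη, hE_def]
    field_simp
    ring
  have B2 : (∫ u in (η / θ)..η, (u - η / θ) * (c * (u ^ 3)⁻¹)) = E := by
    rw [int_weight' (η / θ) (η / θ) η c ha0 hη, hE_def]
    field_simp
    ring
  -- continuity facts
  have hIcc1 : Icc η (θ * η) ⊆ Ioi (0 : ℝ) := fun u hu => lt_of_lt_of_le hη hu.1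
  have hIcc2 : Icc (η / θ) η ⊆ Ioi (0 : ℝ) := fun u hu => lt_of_lt_of_le ha0 hu.1
  have hcont1 : ContinuousOn (fun u : ℝ => (θ * η - u) * A'' u) (Icc η (θ * η)) :=
    (by fun_prop : ContinuousOn (fun u : ℝ => θ * η - u) _).mul (hcont.mono hIcc1)
  have hcont2 : ContinuousOn (fun u : ℝ => (u - η / θ) * A'' u) (Icc (η / θ) η) :=
    (by fun_prop : ContinuousOn (fun u : ℝ => u - η / θ) _).mul (hcont.mono hIcc2)
  have hcont1' : ContinuousOn (fun u : ℝ => (θ * η - u) * (c * (u ^ 3)⁻¹)) (Icc η (θ * η)) := by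
    apply ContinuousOn.mul (by fun_prop)
    apply ContinuousOn.mul continuousOn_const
    apply ContinuousOn.inv₀ (by fun_prop)
    intro u hu
    exact pow_ne_zero 3 (ne_of_gt (hIcc1 hu))
  have hcont2' : ContinuousOn (fun u : ℝ => (u - η / θ) * (c * (u ^ 3)⁻¹)) (Icc (η / θ) η) := by
    apply ContinuousOn.mul (by fun_prop)
    apply ContinuousOn.mul continuousOn_const
    apply ContinuousOn.inv₀ (by fun_prop)
    intro u hu
    exact pow_ne_zero 3 (ne_of_gt (hIcc2 hu))
  -- midpoints
  have hm1 : (η + θ * η) / 2 ∈ Icc η (θ * η) := by constructor <;> nlinarith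
  have hm1a : η < (η + θ * η) / 2 := by nlinarith
  have hm1b : (η + θ * η) / 2 < θ * η := by nlinarith
  have hm2 : (η / θ + η) / 2 ∈ Icc (η / θ) η := by constructor <;> nlinarith
  have hm2a : η / θ < (η / θ + η) / 2 := by nlinarith
  have hm2b : (η / θ + η) / 2 < η := by nlinarith
  refine ⟨?_, ?_, ?_, ?_, ?_⟩
  · -- strictly monotone case
    intro hm
    have L1 : (∫ u in η..(θ * η), (θ * η - u) * (c * (u ^ 3)⁻¹))
        < ∫ u in η..(θ * η), (θ * η - u) * A'' u := by
      apply integral_lt_integral_of_continuousOn_of_le_of_exists_lt hθη hcont1' hcont1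
      · intro x hx
        have hx0 : 0 < x := lt_trans hη hx.1
        have hx3 : 0 < x ^ 3 := by positivity
        have hgt : c < x ^ 3 * A'' x := hm (mem_Ioi.2 hη) (mem_Ioi.2 hx0) hx.1
        have h1 : c * (x ^ 3)⁻¹ ≤ A'' x := by
          rw [← div_eq_mul_inv, div_le_iff₀ hx3]; nlinarith
        have h2 : 0 ≤ θ * η - x := by linarith [hx.2]
        exact mul_le_mul_of_nonneg_left h1 h2
      · refine ⟨(η + θ * η) / 2, hm1, ?_⟩
        set x := (η + θ * η) / 2
        have hx0 : 0 < x := lt_trans hη hm1a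
        have hx3 : 0 < x ^ 3 := by positivity
        have hgt : c < x ^ 3 * A'' x := hm (mem_Ioi.2 hη) (mem_Ioi.2 hx0) hm1a
        have h1 : c * (x ^ 3)⁻¹ < A'' x := by
          rw [← div_eq_mul_inv, div_lt_iff₀ hx3]; nlinarith
        have h2 : 0 < θ * η - x := by linarith
        exact mul_lt_mul_of_pos_left h1 h2
    have L2 : (∫ u in (η / θ)..η, (u - η / θ) * A'' u)
        < ∫ u in (η / θ)..η, (u - η / θ) * (c * (u ^ 3)⁻¹) := by
      apply integral_lt_integral_of_continuousOn_of_le_of_exists_lt haη hcont2 hcont2'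
      · intro x hx
        have hx0 : 0 < x := lt_trans ha0 hx.1
        have hx3 : 0 < x ^ 3 := by positivity
        have hle : x ^ 3 * A'' x ≤ c :=
          hm.monotoneOn (mem_Ioi.2 hx0) (mem_Ioi.2 hη) hx.2
        have h1 : A'' x ≤ c * (x ^ 3)⁻¹ := by
          rw [← div_eq_mul_inv, le_div_iff₀ hx3]; nlinarith
        have h2 : 0 ≤ x - η / θ := by linarith [hx.1]
        exact mul_le_mul_of_nonneg_left h1 h2
      · refine ⟨(η / θ + η) / 2, hm2, ?_⟩
        set x := (η / θ + η) / 2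
        have hx0 : 0 < x := lt_trans ha0 hm2a
        have hx3 : 0 < x ^ 3 := by positivity
        have hlt : x ^ 3 * A'' x < c := hm (mem_Ioi.2 hx0) (mem_Ioi.2 hη) hm2b
        have h1 : A'' x < c * (x ^ 3)⁻¹ := by
          rw [← div_eq_mul_inv, lt_div_iff₀ hx3]; nlinarith
        have h2 : 0 < x - η / θ := by linarith
        exact mul_lt_mul_of_pos_left h1 h2
    rw [T1, T2]
    calc (∫ u in (η / θ)..η, (u - η / θ) * A'' u)
        < ∫ u in (η / θ)..η, (u - η / θ) * (c * (u ^ 3)⁻¹) := L2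
      _ = E := B2
      _ = ∫ u in η..(θ * η), (θ * η - u) * (c * (u ^ 3)⁻¹) := B1.symm
      _ < _ := L1
  · -- strictly antitone case
    intro hm
    have L1 : (∫ u in η..(θ * η), (θ * η - u) * A'' u)
        < ∫ u in η..(θ * η), (θ * η - u) * (c * (u ^ 3)⁻¹) := by
      apply integral_lt_integral_of_continuousOn_of_le_of_exists_lt hθη hcont1 hcont1'
      · intro x hx
        have hx0 : 0 < x := lt_trans hη hx.1
        have hx3 : 0 < x ^ 3 := by positivity
        have hgt : x ^ 3 * A'' x < c := hm (mem_Ioi.2 hη) (mem_Ioi.2 hx0) hx.1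
        have h1 : A'' x ≤ c * (x ^ 3)⁻¹ := by
          rw [← div_eq_mul_inv, le_div_iff₀ hx3]; nlinarith
        have h2 : 0 ≤ θ * η - x := by linarith [hx.2]
        exact mul_le_mul_of_nonneg_left h1 h2
      · refine ⟨(η + θ * η) / 2, hm1, ?_⟩
        set x := (η + θ * η) / 2
        have hx0 : 0 < x := lt_trans hη hm1a
        have hx3 : 0 < x ^ 3 := by positivity
        have hgt : x ^ 3 * A'' x < c := hm (mem_Ioi.2 hη) (mem_Ioi.2 hx0) hm1a
        have h1 : A'' x < c * (x ^ 3)⁻¹ := by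
          rw [← div_eq_mul_inv, lt_div_iff₀ hx3]; nlinarith
        have h2 : 0 < θ * η - x := by linarith
        exact mul_lt_mul_of_pos_left h1 h2
    have L2 : (∫ u in (η / θ)..η, (u - η / θ) * (c * (u ^ 3)⁻¹))
        < ∫ u in (η / θ)..η, (u - η / θ) * A'' u := by
      apply integral_lt_integral_of_continuousOn_of_le_of_exists_lt haη hcont2' hcont2
      · intro x hx
        have hx0 : 0 < x := lt_trans ha0 hx.1
        have hx3 : 0 < x ^ 3 := by positivity
        have hle : c ≤ x ^ 3 * A'' x :=
          hm.antitoneOn (mem_Ioi.2 hx0) (mem_Ioi.2 hη) hx.2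
        have h1 : c * (x ^ 3)⁻¹ ≤ A'' x := by
          rw [← div_eq_mul_inv, div_le_iff₀ hx3]; nlinarith
        have h2 : 0 ≤ x - η / θ := by linarith [hx.1]
        exact mul_le_mul_of_nonneg_left h1 h2
      · refine ⟨(η / θ + η) / 2, hm2, ?_⟩
        set x := (η / θ + η) / 2
        have hx0 : 0 < x := lt_trans ha0 hm2a
        have hx3 : 0 < x ^ 3 := by positivity
        have hlt : c < x ^ 3 * A'' x := hm (mem_Ioi.2 hx0) (mem_Ioi.2 hη) hm2b
        have h1 : c * (x ^ 3)⁻¹ < A'' x := by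
          rw [← div_eq_mul_inv, div_lt_iff₀ hx3]; nlinarith
        have h2 : 0 < x - η / θ := by linarith
        exact mul_lt_mul_of_pos_left h1 h2
    rw [T1, T2]
    calc (∫ u in η..(θ * η), (θ * η - u) * A'' u)
        < ∫ u in η..(θ * η), (θ * η - u) * (c * (u ^ 3)⁻¹) := L1
      _ = E := B1
      _ = ∫ u in (η / θ)..η, (u - η / θ) * (c * (u ^ 3)⁻¹) := B2.symm
      _ < _ := L2
  · -- constant case
    intro hconst
    have hval : ∀ x : ℝ, 0 < x → A'' x = c * (x ^ 3)⁻¹ := by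
      intro x hx0
      have hx3 : (x : ℝ) ^ 3 ≠ 0 := by positivity
      have := hconst x (mem_Ioi.2 hx0) η (mem_Ioi.2 hη)
      field_simp
      linarith [this]
    have E1 : (∫ u in η..(θ * η), (θ * η - u) * A'' u)
        = ∫ u in η..(θ * η), (θ * η - u) * (c * (u ^ 3)⁻¹) := by
      apply integral_congr
      intro u hu
      simp only
      rw [hval u (pos_of_mem_uIcc hη hbη hu)]
    have E2 : (∫ u in (η / θ)..η, (u - η / θ) * A'' u)
        = ∫ u in (η / θ)..η, (u - η / θ) * (c * (u ^ 3)⁻¹) := by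
      apply integral_congr
      intro u hu
      simp only
      rw [hval u (pos_of_mem_uIcc ha0 hη hu)]
    rw [T1, T2, E1, E2, B1, B2]
  · -- first double integral
    have hinner : EqOn (fun v : ℝ => ∫ u in (1 : ℝ)..v, (u ^ 3)⁻¹)
        (fun v : ℝ => 1 / 2 - (v ^ 2)⁻¹ / 2) (uIcc 1 θ) := by
      intro v hv
      have hv0 : 0 < v := pos_of_mem_uIcc one_pos hθ0 hv
      simp only
      rw [int_inv3 1 v one_pos hv0]
      norm_num
    rw [integral_congr hinner, int_halfsub 1 θ one_pos hθ0]
    field_simp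
    ring
  · -- second double integral
    have hθi : 0 < θ⁻¹ := by positivity
    have hinner : EqOn (fun v : ℝ => ∫ u in v..(1 : ℝ), (u ^ 3)⁻¹)
        (fun v : ℝ => (v ^ 2)⁻¹ / 2 - 1 / 2) (uIcc θ⁻¹ 1) := by
      intro v hv
      have hv0 : 0 < v := pos_of_mem_uIcc hθi one_pos hv
      simp only
      rw [int_inv3 v 1 hv0 one_pos]
      norm_num
    have hneg : EqOn (fun v : ℝ => (v ^ 2)⁻¹ / 2 - 1 / 2)
        (fun v : ℝ => -(1 / 2 - (v ^ 2)⁻¹ / 2)) (uIcc θ⁻¹ 1) := by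
      intro v _; ring
    rw [integral_congr hinner, integral_congr hneg, integral_neg,
      int_halfsub θ⁻¹ 1 hθi one_pos]
    have hθ' : θ ≠ 0 := ne_of_gt hθ0
    field_simp
    ring
end

section
/- Let A : ℝ → ℝ be twice continuously differentiable, let d_A(y,x) = A(y) − A(x) − A'(x)(y−x) be its Bregman divergence, and fix η∈ℝ. Then, for all θ>0: (1) if A''(η+u) > A''(η−u) for all u>0, then d_A(η+θ, η) > d_A(η−θ, η); (2) if A''(η+u) < A''(η−u) for all u>0, then d_A(η+θ, η) < d_A(η−θ, η); (3) if A''(η+u) = A''(η−u) for all u>0, then d_A(η+θ, η) = d_A(η−θ, η). In particular, for A(u) = e^u (the log-partition function of the Poisson family in its natural parameter), d_A(η+θ, η) > d_A(η−θ, η) for every η∈ℝ and θ>0. -/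
private lemma auxG {A A' A'' : ℝ → ℝ}
    (hA' : ∀ x, HasDerivAt A (A' x) x)
    (hA'' : ∀ x, HasDerivAt A' (A'' x) x) (η : ℝ) :
    (∀ θ : ℝ, HasDerivAt (fun t => A' (η + t) + A' (η - t) - 2 * A' η)
      (A'' (η + θ) - A'' (η - θ)) θ) ∧
    (∀ θ : ℝ, HasDerivAt (fun t => A (η + t) - A (η - t) - 2 * A' η * t)
      (A' (η + θ) + A' (η - θ) - 2 * A' η) θ) := by
  constructor
  · intro θ
    have h1 : HasDerivAt (fun t => A' (η + t)) (A'' (η + θ)) θ := by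
      simpa [Function.comp_def] using (hA'' (η + θ)).comp θ ((hasDerivAt_id θ).const_add η)
    have h2 : HasDerivAt (fun t => A' (η - t)) (-(A'' (η - θ))) θ := by
      simpa [Function.comp_def] using (hA'' (η - θ)).comp θ ((hasDerivAt_id θ).const_sub η)
    simpa [sub_eq_add_neg] using (h1.add h2).sub_const (2 * A' η)
  · intro θ
    have h1 : HasDerivAt (fun t => A (η + t)) (A' (η + θ)) θ := by
      simpa [Function.comp_def] using (hA' (η + θ)).comp θ ((hasDerivAt_id θ).const_add η)
    have h2 : HasDerivAt (fun t => A (η - t)) (-(A' (η - θ))) θ := by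
      simpa [Function.comp_def] using (hA' (η - θ)).comp θ ((hasDerivAt_id θ).const_sub η)
    have h3 : HasDerivAt (fun t : ℝ => 2 * A' η * t) (2 * A' η) θ := by
      simpa using (hasDerivAt_id θ).const_mul (2 * A' η)
    have := (h1.sub h2).sub h3
    rw [show A' (η + θ) + A' (η - θ) - 2 * A' η = A' (η + θ) - -A' (η - θ) - 2 * A' η by ring]; exact this

private lemma auxF_lt {A A' A'' : ℝ → ℝ}
    (hA' : ∀ x, HasDerivAt A (A' x) x)
    (hA'' : ∀ x, HasDerivAt A' (A'' x) x) (η : ℝ)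
    (h : ∀ u > (0 : ℝ), A'' (η - u) < A'' (η + u)) :
    ∀ θ > (0 : ℝ), 0 < A (η + θ) - A (η - θ) - 2 * A' η * θ := by
  obtain ⟨hG, hF⟩ := auxG hA' hA'' η
  set G : ℝ → ℝ := fun t => A' (η + t) + A' (η - t) - 2 * A' η with hGdef
  set F : ℝ → ℝ := fun t => A (η + t) - A (η - t) - 2 * A' η * t with hFdef
  have hGmono : StrictMonoOn G (Set.Ici (0 : ℝ)) := by
    apply strictMonoOn_of_deriv_pos (convex_Ici 0)
      (fun t _ => ((hG t).differentiableAt).continuousAt.continuousWithinAt)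
    intro t ht
    rw [interior_Ici] at ht
    rw [(hG t).deriv]
    exact sub_pos.2 (h t ht)
  have hG0 : G 0 = 0 := by simp [hGdef]; ring
  have hGpos : ∀ t > (0 : ℝ), 0 < G t := fun t ht => by
    have := hGmono (Set.self_mem_Ici) (Set.mem_Ici.2 ht.le) ht
    rwa [hG0] at this
  have hFmono : StrictMonoOn F (Set.Ici (0 : ℝ)) := by
    apply strictMonoOn_of_deriv_pos (convex_Ici 0)
      (fun t _ => ((hF t).differentiableAt).continuousAt.continuousWithinAt)
    intro t ht
    rw [interior_Ici] at ht
    rw [(hF t).deriv]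
    exact hGpos t ht
  intro θ hθ
  have hF0 : F 0 = 0 := by simp [hFdef]
  have := hFmono (Set.self_mem_Ici) (Set.mem_Ici.2 hθ.le) hθ
  rwa [hF0] at this

private lemma auxF_le {A A' A'' : ℝ → ℝ}
    (hA' : ∀ x, HasDerivAt A (A' x) x)
    (hA'' : ∀ x, HasDerivAt A' (A'' x) x) (η : ℝ)
    (h : ∀ u > (0 : ℝ), A'' (η - u) ≤ A'' (η + u)) :
    ∀ θ > (0 : ℝ), 0 ≤ A (η + θ) - A (η - θ) - 2 * A' η * θ := by
  obtain ⟨hG, hF⟩ := auxG hA' hA'' η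
  set G : ℝ → ℝ := fun t => A' (η + t) + A' (η - t) - 2 * A' η with hGdef
  set F : ℝ → ℝ := fun t => A (η + t) - A (η - t) - 2 * A' η * t with hFdef
  have hGmono : MonotoneOn G (Set.Ici (0 : ℝ)) := by
    apply monotoneOn_of_deriv_nonneg (convex_Ici 0)
      (fun t _ => ((hG t).differentiableAt).continuousAt.continuousWithinAt)
      (fun t ht => by rw [interior_Ici] at ht; exact ((hG t).differentiableAt).differentiableWithinAt)
    intro t ht
    rw [interior_Ici] at ht
    rw [(hG t).deriv]
    exact sub_nonneg.2 (h t ht)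
  have hG0 : G 0 = 0 := by simp [hGdef]; ring
  have hGpos : ∀ t ≥ (0 : ℝ), 0 ≤ G t := fun t ht => by
    have := hGmono (Set.self_mem_Ici) (Set.mem_Ici.2 ht) ht
    rwa [hG0] at this
  have hFmono : MonotoneOn F (Set.Ici (0 : ℝ)) := by
    apply monotoneOn_of_deriv_nonneg (convex_Ici 0)
      (fun t _ => ((hF t).differentiableAt).continuousAt.continuousWithinAt)
      (fun t ht => by rw [interior_Ici] at ht; exact ((hF t).differentiableAt).differentiableWithinAt)
    intro t ht
    rw [interior_Ici] at ht
    rw [(hF t).deriv]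
    exact hGpos t ht.le
  intro θ hθ
  have hF0 : F 0 = 0 := by simp [hFdef]
  have := hFmono (Set.self_mem_Ici) (Set.mem_Ici.2 hθ.le) hθ.le
  rwa [hF0] at this

private lemma auxRefl {A A' A'' : ℝ → ℝ}
    (hA' : ∀ x, HasDerivAt A (A' x) x)
    (hA'' : ∀ x, HasDerivAt A' (A'' x) x) (η : ℝ) :
    (∀ x, HasDerivAt (fun y => A (2 * η - y)) (-(A' (2 * η - x))) x) ∧
    (∀ x, HasDerivAt (fun y => -(A' (2 * η - y))) (A'' (2 * η - x)) x) := by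
  constructor
  · intro x
    simpa [Function.comp_def] using (hA' (2 * η - x)).comp x ((hasDerivAt_id x).const_sub (2 * η))
  · intro x
    have := ((hA'' (2 * η - x)).comp x ((hasDerivAt_id x).const_sub (2 * η))).neg
    rw [show A'' (2 * η - x) = -(A'' (2 * η - x) * -1) by ring]; exact this

/-- Asymmetry of the Bregman divergence of a log-partition function on ℝ
(Lemma "acceleration" of the paper, case `Ω = ℝ`): the sign of
`d_A(η+θ, η) − d_A(η−θ, η)` is governed by the comparison of `A''(η+u)` with
`A''(η−u)`. In particular, for `A = exp` (the Poisson family), the Bregman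
divergence satisfies `d_A(η+θ, η) > d_A(η−θ, η)`. -/
theorem stmt9
    (A A' A'' : ℝ → ℝ)
    (hA' : ∀ x, HasDerivAt A (A' x) x)
    (hA'' : ∀ x, HasDerivAt A' (A'' x) x)
    (hcont : Continuous A'')
    (dA : ℝ → ℝ → ℝ) (hdA : ∀ y x, dA y x = A y - A x - A' x * (y - x))
    (η : ℝ) :
    (∀ θ > (0 : ℝ),
      ((∀ u > (0 : ℝ), A'' (η - u) < A'' (η + u)) → dA (η - θ) η < dA (η + θ) η) ∧
      ((∀ u > (0 : ℝ), A'' (η + u) < A'' (η - u)) → dA (η + θ) η < dA (η - θ) η) ∧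
      ((∀ u > (0 : ℝ), A'' (η + u) = A'' (η - u)) → dA (η + θ) η = dA (η - θ) η)) ∧
    (∀ θ > (0 : ℝ),
      Real.exp (η - θ) - Real.exp η - Real.exp η * ((η - θ) - η)
        < Real.exp (η + θ) - Real.exp η - Real.exp η * ((η + θ) - η)) := by
  obtain ⟨hB', hB''⟩ := auxRefl hA' hA'' η
  constructor
  · intro θ hθ
    refine ⟨fun h => ?_, fun h => ?_, fun h => ?_⟩
    · have := auxF_lt hA' hA'' η h θ hθ
      rw [hdA, hdA]; linarith
    · -- reflected function B y = A (2η - y)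
      have h' : ∀ u > (0 : ℝ), (fun y => A'' (2 * η - y)) (η - u) < (fun y => A'' (2 * η - y)) (η + u) := by
        intro u hu
        have h1 : 2 * η - (η - u) = η + u := by ring
        have h2 : 2 * η - (η + u) = η - u := by ring
        simp only [h1, h2]
        exact h u hu
      have key := auxF_lt hB' hB'' η h' θ hθ
      have h1 : 2 * η - (η - θ) = η + θ := by ring
      have h2 : 2 * η - (η + θ) = η - θ := by ring
      have h3 : 2 * η - η = η := by ring
      simp only [h1, h2, h3] at key
      rw [hdA, hdA]; linarith
    · have hle1 : ∀ u > (0 : ℝ), A'' (η - u) ≤ A'' (η + u) := fun u hu => (h u hu).ge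
      have key1 := auxF_le hA' hA'' η hle1 θ hθ
      have h' : ∀ u > (0 : ℝ), (fun y => A'' (2 * η - y)) (η - u) ≤ (fun y => A'' (2 * η - y)) (η + u) := by
        intro u hu
        have h1 : 2 * η - (η - u) = η + u := by ring
        have h2 : 2 * η - (η + u) = η - u := by ring
        simp only [h1, h2]
        exact (h u hu).le
      have key2 := auxF_le hB' hB'' η h' θ hθ
      have h1 : 2 * η - (η - θ) = η + θ := by ring
      have h2 : 2 * η - (η + θ) = η - θ := by ring
      have h3 : 2 * η - η = η := by ring
      simp only [h1, h2, h3] at key2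
      rw [hdA, hdA]; linarith
  · intro θ hθ
    have hE : ∀ x : ℝ, HasDerivAt Real.exp (Real.exp x) x := fun x => Real.hasDerivAt_exp x
    have h : ∀ u > (0 : ℝ), Real.exp (η - u) < Real.exp (η + u) := by
      intro u hu; exact Real.exp_lt_exp.2 (by linarith)
    have := auxF_lt hE hE η h θ hθ
    linarith
end

section
/- The function f : (0,∞) → ℝ defined by f(x) = x³ · ∑_{n=0}^∞ 1/(x+n)² is strictly increasing on (0,∞). (The series equals the trigamma function ψ'(x), so x³·ψ'(x) is strictly increasing; its derivative satisfies f'(x) = x² · ∑_{n=0}^∞ (x+3n)/(x+n)³ > 0.) -/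
open Set

lemma summ_aux {x : ℝ} (hx : 0 < x) :
    Summable (fun n : ℕ => x ^ 3 / (x + n) ^ 2) := by
  have hb : Summable (fun n : ℕ => 1 / ((n : ℝ) + 1) ^ 2) := by
    have := (summable_nat_add_iff (f := fun n : ℕ => 1 / (n : ℝ) ^ 2) 1).2
      (Real.summable_one_div_nat_pow.mpr (by norm_num : (1:ℕ) < 2))
    simpa using this
  set c : ℝ := min x 1 with hc
  have hc0 : 0 < c := lt_min hx one_pos
  have : Summable (fun n : ℕ => (1 / c ^ 2) * (1 / ((n : ℝ) + 1) ^ 2)) :=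
    hb.mul_left _
  have key : Summable (fun n : ℕ => 1 / (x + n) ^ 2) := by
    refine this.of_nonneg_of_le (fun n => by positivity) (fun n => ?_)
    have hxn : 0 < x + n := by positivity
    have hle : c * ((n : ℝ) + 1) ≤ x + n := by
      have h1 : c ≤ x := min_le_left _ _
      have h2 : c ≤ 1 := min_le_right _ _
      nlinarith [Nat.cast_nonneg (α := ℝ) n]
    rw [one_div_mul_one_div, ← mul_pow, div_le_div_iff₀ (by positivity) (by positivity)]
    nlinarith [hxn, mul_pos hc0 (by positivity : (0:ℝ) < (n:ℝ)+1), hle]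
  simpa [div_eq_mul_inv, one_div] using key.mul_left (x ^ 3)

/-- The function `x ↦ x³ · ∑_{n=0}^∞ 1/(x+n)²` (i.e. `x³ ψ'(x)` where `ψ'` is
the trigamma function) is strictly increasing on `(0,∞)`. -/
theorem stmt15 :
    StrictMonoOn (fun x : ℝ => x ^ 3 * ∑' n : ℕ, 1 / (x + n) ^ 2) (Ioi 0) := by
  intro a ha b hb hab
  simp only [mem_Ioi] at ha hb
  have hrw : ∀ x : ℝ, 0 < x →
      x ^ 3 * ∑' n : ℕ, 1 / (x + n) ^ 2 = ∑' n : ℕ, x ^ 3 / (x + n) ^ 2 := by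
    intro x hx
    rw [← tsum_mul_left]
    congr 1; ext n; ring
  simp only [hrw a ha, hrw b hb]
  refine Summable.tsum_lt_tsum_of_nonneg (i := 0) (fun n => by positivity) (fun n => ?_) ?_ (summ_aux hb)
  · have han : (0:ℝ) < a + n := by positivity
    have hbn : (0:ℝ) < b + n := by positivity
    rw [div_le_div_iff₀ (by positivity) (by positivity)]
    have h1 : a * (b + n) ≤ b * (a + n) := by nlinarith [Nat.cast_nonneg (α := ℝ) n]
    have h2 : (a * (b + n)) ^ 2 ≤ (b * (a + n)) ^ 2 := by
      apply pow_le_pow_left₀ (by positivity) h1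
    nlinarith [mul_le_mul_of_nonneg_left h2 ha.le,
      mul_le_mul_of_nonneg_right hab.le (sq_nonneg (b * (a + (n:ℝ))))]
  · show a ^ 3 / (a + (0:ℕ)) ^ 2 < b ^ 3 / (b + (0:ℕ)) ^ 2
    push_cast
    rw [add_zero, add_zero]
    rw [div_lt_div_iff₀ (by positivity) (by positivity)]
    nlinarith [mul_pos (mul_pos (mul_pos ha ha) (mul_pos hb hb)) (sub_pos.mpr hab)]
end

section
/- Let w : ℝ → [0,∞) be continuous. Suppose that for every probability measure on ℝ with cumulative distribution function G, the threshold-weighted Cramér divergence is symmetric in scale and in location around G: ∫_ℝ w(y)(G(y/σ) − G(y))² dy = ∫_ℝ w(y)(G(σy) − G(y))² dy for all σ > 0, and ∫_ℝ w(y)(G(y−μ) − G(y))² dy = ∫_ℝ w(y)(G(y+μ) − G(y))² dy for all μ ∈ ℝ. Then w(y) = 0 for all y ∈ ℝ. In other words, no nonzero threshold weight function makes threshold-weighted CRP loss penalize symmetrically in all location families and all scale families simultaneously. -/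
open MeasureTheory Set

theorem aux_ind_int (w : ℝ → ℝ) (a b : ℝ) (hab : a ≤ b) :
    (∫ y, w y * ((if a ≤ y then (1:ℝ) else 0) - (if b ≤ y then 1 else 0)) ^ 2)
      = ∫ y in a..b, w y := by
  have h1 : (fun y => w y * ((if a ≤ y then (1:ℝ) else 0) - (if b ≤ y then 1 else 0)) ^ 2)
      = (Ico a b).indicator w := by
    funext y
    by_cases h1 : a ≤ y <;> by_cases h2 : b ≤ y
    · simp [Set.indicator, mem_Ico, h1, h2, not_lt.mpr h2]
    · simp [Set.indicator, mem_Ico, h1, h2, lt_of_not_ge h2]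
    · exact absurd (le_trans hab h2) h1
    · simp [Set.indicator, mem_Ico, h1, h2]
  rw [h1, integral_indicator measurableSet_Ico, integral_Ico_eq_integral_Ioo,
    intervalIntegral.integral_of_le hab, integral_Ioc_eq_integral_Ioo]

theorem aux_ind_int' (w : ℝ → ℝ) (a b : ℝ) (hab : a ≤ b) :
    (∫ y, w y * ((if b ≤ y then (1:ℝ) else 0) - (if a ≤ y then 1 else 0)) ^ 2)
      = ∫ y in a..b, w y := by
  rw [← aux_ind_int w a b hab]
  congr 1; funext y; ring

/-- No nonzero threshold weight function makes threshold-weighted CRP loss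
penalize symmetrically in all scale families and all location families
simultaneously: if the weighted Cramér divergence is symmetric in scale and in
location around every probability distribution, then `w ≡ 0`. -/
theorem stmt16
    (w : ℝ → ℝ) (hwc : Continuous w) (hw0 : ∀ y, 0 ≤ w y)
    (hscale : ∀ P : Measure ℝ, IsProbabilityMeasure P → ∀ σ > (0 : ℝ),
      (∫ y, w y * ((P (Iic (y / σ))).toReal - (P (Iic y)).toReal) ^ 2)
        = ∫ y, w y * ((P (Iic (σ * y))).toReal - (P (Iic y)).toReal) ^ 2)
    (hloc : ∀ P : Measure ℝ, IsProbabilityMeasure P → ∀ μ : ℝ,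
      (∫ y, w y * ((P (Iic (y - μ))).toReal - (P (Iic y)).toReal) ^ 2)
        = ∫ y, w y * ((P (Iic (y + μ))).toReal - (P (Iic y)).toReal) ^ 2) :
    ∀ y, w y = 0 := by
  have hdir : ∀ c y : ℝ, ((Measure.dirac c : Measure ℝ) (Iic y)).toReal
      = if c ≤ y then 1 else 0 := by
    intro c y
    rw [Measure.dirac_apply]
    by_cases h : c ≤ y <;> simp [Set.indicator, mem_Iic, h]
  -- step 1: location symmetry for Dirac measures
  have E : ∀ c μ : ℝ, (∫ t in c..(c+μ), w t) = ∫ t in (c-μ)..c, w t := by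
    intro c μ
    have h := hloc (Measure.dirac c) inferInstance μ
    simp_rw [hdir] at h
    have e1 : ∀ y : ℝ, (c ≤ y - μ) = (c + μ ≤ y) := fun y => propext ⟨fun h => by linarith, fun h => by linarith⟩
    have e2 : ∀ y : ℝ, (c ≤ y + μ) = (c - μ ≤ y) := fun y => propext ⟨fun h => by linarith, fun h => by linarith⟩
    simp_rw [e1, e2] at h
    rcases le_total 0 μ with hμ | hμ
    · rwa [aux_ind_int' w c (c+μ) (by linarith), aux_ind_int w (c-μ) c (by linarith)] at h
    · rw [aux_ind_int w (c+μ) c (by linarith), aux_ind_int' w c (c-μ) (by linarith)] at h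
      rw [intervalIntegral.integral_symm (c+μ) c, intervalIntegral.integral_symm c (c-μ), h]
  -- step 2: w is symmetric around every point, hence constant
  set A : ℝ → ℝ := fun x => ∫ t in (0:ℝ)..x, w t with hA_def
  have hA : ∀ x, HasDerivAt A (w x) x := fun x =>
    intervalIntegral.integral_hasDerivAt_right (hwc.intervalIntegrable _ _)
      (hwc.stronglyMeasurableAtFilter _ _) hwc.continuousAt
  have hadd : ∀ a b : ℝ, (∫ t in a..b, w t) = A b - A a := by
    intro a b
    have := intervalIntegral.integral_add_adjacent_intervals
      (Continuous.intervalIntegrable (μ := volume) hwc 0 a) (Continuous.intervalIntegrable (μ := volume) hwc a b)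
    simp only [hA_def]; linarith
  have hsym : ∀ c h : ℝ, w (c + h) = w (c - h) := by
    intro c h
    have hfg : (fun μ => A (c+μ) - A c) = (fun μ => A c - A (c-μ)) := by
      funext μ
      have h1 := E c μ
      rw [hadd, hadd] at h1
      linarith
    have inner1 : HasDerivAt (fun μ : ℝ => c + μ) 1 h := (hasDerivAt_id h).const_add c
    have d1 : HasDerivAt (fun μ => A (c+μ) - A c) (w (c+h)) h := by
      have := ((hA (c+h)).comp h inner1).sub_const (A c)
      simpa using this
    have inner2 : HasDerivAt (fun μ : ℝ => c - μ) (-1) h := by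
      exact (hasDerivAt_id' h).const_sub c
    have d2 : HasDerivAt (fun μ => A c - A (c-μ)) (w (c-h)) h := by
      have := ((hA (c-h)).comp h inner2).const_sub (A c)
      simpa using this
    rw [hfg] at d1
    exact d1.unique d2
  have hconst : ∀ x : ℝ, w x = w 0 := by
    intro x
    have := hsym (x/2) (x/2)
    rw [show x/2 + x/2 = x by ring, show x/2 - x/2 = 0 by ring] at this
    exact this
  -- step 3: scale symmetry for Dirac at 1 kills the constant
  have h := hscale (Measure.dirac 1) inferInstance 2 (by norm_num)
  simp_rw [hdir] at h
  have e1 : ∀ y : ℝ, ((1:ℝ) ≤ y / 2) = (2 ≤ y) := fun y => propext ⟨fun h => by linarith, fun h => by linarith⟩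
  have e2 : ∀ y : ℝ, ((1:ℝ) ≤ 2 * y) = (1/2 ≤ y) := fun y => propext ⟨fun h => by linarith, fun h => by linarith⟩
  simp_rw [e1, e2] at h
  rw [aux_ind_int' w 1 2 (by norm_num), aux_ind_int w (1/2) 1 (by norm_num)] at h
  have hw : w = fun _ => w 0 := funext hconst
  rw [hw, intervalIntegral.integral_const, intervalIntegral.integral_const] at h
  simp only [smul_eq_mul] at h
  have h0 : w 0 = 0 := by linarith
  intro y
  rw [hconst y, h0]
end
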